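/- Doubly exponential bound on the belief-state space (Theorem 2 of the paper): let φ be an LTLf formula over P with P = P_o ⊎ P_u, and let Reach^B(φ) = {[φ]_∼} ∪ {[ψ']_∼ : ψ' is the formula component of fpObs(φ, σ_o) for some σ_o ∈ (B^{P_o})^+} be the set of belief states reachable by observable progression, taken modulo propositional equivalence. Then Reach^B(φ) is finite and has cardinality at most 2^(2^n), where n = |sf(φ)|. -/

import Mathlib

/-- LTLf formulas over atomic propositions `P`.  `next` is the weak next `X`,
`snext` is the strong next `X[!]`, `fin` is `F`, `glob` is `G`,
`untl` is `U` and `rels` is `R`. -/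
inductive LTLf (P : Type) : Type
  | tt : LTLf P
  | ff : LTLf P
  | atom : P → LTLf P
  | not : LTLf P → LTLf P
  | and : LTLf P → LTLf P → LTLf P
  | or : LTLf P → LTLf P → LTLf P
  | next : LTLf P → LTLf P
  | snext : LTLf P → LTLf P
  | fin : LTLf P → LTLf P
  | glob : LTLf P → LTLf P
  | untl : LTLf P → LTLf P → LTLf P
  | rels : LTLf P → LTLf P → LTLf P

namespace LTLf

variable {P O U : Type}

/-- Standard LTLf satisfaction `σ, i ⊨ φ` on finite traces.  A word is a list of
Boolean assignments; positions out of range never occur in the statements. -/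
def Sat (σ : List (P → Bool)) : ℕ → LTLf P → Prop
  | _, tt => True
  | _, ff => False
  | i, atom p => (σ.getD i (fun _ => false)) p = true
  | i, not φ => ¬ Sat σ i φ
  | i, and φ ψ => Sat σ i φ ∧ Sat σ i ψ
  | i, or φ ψ => Sat σ i φ ∨ Sat σ i ψ
  | i, next φ => i + 1 = σ.length ∨ Sat σ (i + 1) φ
  | i, snext φ => i + 1 < σ.length ∧ Sat σ (i + 1) φ
  | i, fin φ => ∃ j, i ≤ j ∧ j < σ.length ∧ Sat σ j φ
  | i, glob φ => ∀ j, i ≤ j → j < σ.length → Sat σ j φ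
  | i, untl φ ψ =>
      ∃ j, i ≤ j ∧ j < σ.length ∧ Sat σ j ψ ∧ ∀ k, i ≤ k → k < j → Sat σ k φ
  | i, rels φ ψ =>
      ∀ j, i ≤ j → j < σ.length → (Sat σ j ψ ∨ ∃ k, i ≤ k ∧ k < j ∧ Sat σ k φ)

/-- Boolean connectives lifted componentwise to (formula, flag) pairs. -/
def pnot (x : LTLf P × Bool) : LTLf P × Bool := (not x.1, !x.2)

def pand (x y : LTLf P × Bool) : LTLf P × Bool := (and x.1 y.1, x.2 && y.2)

def por (x y : LTLf P × Bool) : LTLf P × Bool := (or x.1 y.1, x.2 || y.2)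

/-- Formula progression: given a formula and an assignment, return the
progressed formula together with the acceptance flag. -/
def fp (w : P → Bool) : LTLf P → LTLf P × Bool
  | tt => (tt, true)
  | ff => (ff, false)
  | atom p => if w p = true then (tt, true) else (ff, false)
  | not φ => pnot (fp w φ)
  | and φ ψ => pand (fp w φ) (fp w ψ)
  | or φ ψ => por (fp w φ) (fp w ψ)
  | next φ => (φ, true)
  | snext φ => (φ, false)
  | fin φ => por (fp w φ) (fin φ, false)
  | glob φ => pand (fp w φ) (glob φ, true)
  | untl φ ψ => por (fp w ψ) (pand (fp w φ) (untl φ ψ, false))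
  | rels φ ψ => pand (fp w ψ) (por (fp w φ) (rels φ ψ, true))

/-- Progression iterated over a nonempty word `w :: ws`. -/
def fpWord (φ : LTLf P) (w : P → Bool) : List (P → Bool) → LTLf P × Bool
  | [] => fp w φ
  | w' :: ws => fpWord (fp w φ).1 w' ws

/-- Propositional (Boolean) evaluation of a formula, treating atomic
propositions and maximal temporal subformulas as Boolean variables valued
by `v`. -/
def propEval (v : LTLf P → Bool) : LTLf P → Bool
  | tt => true
  | ff => false
  | not φ => !(propEval v φ)
  | and φ ψ => propEval v φ && propEval v ψ
  | or φ ψ => propEval v φ || propEval v ψ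
  | φ => v φ

/-- Propositional equivalence `φ ∼ ψ`. -/
def propEquiv (φ ψ : LTLf P) : Prop :=
  ∀ v : LTLf P → Bool, propEval v φ = propEval v ψ

/-- The `∼`-equivalence class `[φ]_∼` of a formula. -/
def pcls (φ : LTLf P) : Set (LTLf P) := { ψ | propEquiv φ ψ }

/-- The set of subformulas of a formula. -/
def sf : LTLf P → Set (LTLf P)
  | tt => {tt}
  | ff => {ff}
  | atom p => {atom p}
  | not φ => insert (not φ) (sf φ)
  | and φ ψ => insert (and φ ψ) (sf φ ∪ sf ψ)
  | or φ ψ => insert (or φ ψ) (sf φ ∪ sf ψ)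
  | next φ => insert (next φ) (sf φ)
  | snext φ => insert (snext φ) (sf φ)
  | fin φ => insert (fin φ) (sf φ)
  | glob φ => insert (glob φ) (sf φ)
  | untl φ ψ => insert (untl φ ψ) (sf φ ∪ sf ψ)
  | rels φ ψ => insert (rels φ ψ) (sf φ ∪ sf ψ)

/-- The Boolean closure of a set of formulas: the smallest set containing
`X ∪ {tt, ff}` and closed under `¬`, `∧`, `∨`. -/
inductive BC {P : Type} (X : Set (LTLf P)) : LTLf P → Prop
  | base {φ : LTLf P} : φ ∈ X → BC X φ
  | tt' : BC X LTLf.tt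
  | ff' : BC X LTLf.ff
  | not' {φ : LTLf P} : BC X φ → BC X (LTLf.not φ)
  | and' {φ ψ : LTLf P} : BC X φ → BC X ψ → BC X (LTLf.and φ ψ)
  | or' {φ ψ : LTLf P} : BC X φ → BC X ψ → BC X (LTLf.or φ ψ)

/-- A formula which is an atomic proposition or has a temporal operator as its
outermost connective. -/
def isAtomicOrTemporal : LTLf P → Prop
  | atom _ => True
  | next _ => True
  | snext _ => True
  | fin _ => True
  | glob _ => True
  | untl _ _ => True
  | rels _ _ => True
  | _ => False

/-- Observable progression: progress with respect to an observable assignment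
`wo ∈ B^{P_o}`, taking the (componentwise) conjunction of `fp` over all full
assignments compatible with `wo` (i.e. over all assignments of the
unobservable variables `U`). -/
noncomputable def fpObs [Fintype U] [DecidableEq U] (ψ : LTLf (O ⊕ U)) (wo : O → Bool) :
    LTLf (O ⊕ U) × Bool :=
  (((Finset.univ : Finset (U → Bool)).toList.map
      (fun wu => fp (Sum.elim wo wu) ψ)).foldr pand (tt, true))

/-- Observable progression iterated over a nonempty observable word `wo :: wos`. -/
noncomputable def fpObsWord [Fintype U] [DecidableEq U] (φ : LTLf (O ⊕ U)) (wo : O → Bool) :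
    List (O → Bool) → LTLf (O ⊕ U) × Bool
  | [] => fpObs φ wo
  | w :: ws => fpObsWord (fpObs φ wo).1 w ws

/-- The run of the belief-state construction: `runB φ σo t` is the belief state
`s_t` reached after observably progressing `φ` along the first `t` letters of `σo`. -/
noncomputable def runB [Fintype U] [DecidableEq U] (φ : LTLf (O ⊕ U)) (σo : List (O → Bool)) :
    ℕ → LTLf (O ⊕ U)
  | 0 => φ
  | t + 1 => (fpObs (runB φ σo t) (σo.getD t (fun _ => false))).1

variable {P : Type}

/-- Every formula is a subformula of itself. -/
lemma mem_sf_self (φ : LTLf P) : φ ∈ sf φ := by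
  cases φ <;> simp [sf]

/-- Subformula relation is transitive. -/
lemma sf_trans {φ χ : LTLf P} (h : χ ∈ sf φ) : sf χ ⊆ sf φ := by
  induction φ with
  | tt => simp only [sf, Set.mem_singleton_iff] at h; subst h; exact subset_refl _
  | ff => simp only [sf, Set.mem_singleton_iff] at h; subst h; exact subset_refl _
  | atom p => simp only [sf, Set.mem_singleton_iff] at h; subst h; exact subset_refl _
  | not ψ ih =>
      simp only [sf, Set.mem_insert_iff] at h
      rcases h with rfl | h
      · exact subset_refl _
      · exact (ih h).trans (Set.subset_insert _ _)
  | next ψ ih =>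
      simp only [sf, Set.mem_insert_iff] at h
      rcases h with rfl | h
      · exact subset_refl _
      · exact (ih h).trans (Set.subset_insert _ _)
  | snext ψ ih =>
      simp only [sf, Set.mem_insert_iff] at h
      rcases h with rfl | h
      · exact subset_refl _
      · exact (ih h).trans (Set.subset_insert _ _)
  | fin ψ ih =>
      simp only [sf, Set.mem_insert_iff] at h
      rcases h with rfl | h
      · exact subset_refl _
      · exact (ih h).trans (Set.subset_insert _ _)
  | glob ψ ih =>
      simp only [sf, Set.mem_insert_iff] at h
      rcases h with rfl | h
      · exact subset_refl _
      · exact (ih h).trans (Set.subset_insert _ _)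
  | and ψ χ' ih1 ih2 =>
      simp only [sf, Set.mem_insert_iff, Set.mem_union] at h
      rcases h with rfl | h | h
      · exact subset_refl _
      · exact (ih1 h).trans ((Set.subset_union_left).trans (Set.subset_insert _ _))
      · exact (ih2 h).trans ((Set.subset_union_right).trans (Set.subset_insert _ _))
  | or ψ χ' ih1 ih2 =>
      simp only [sf, Set.mem_insert_iff, Set.mem_union] at h
      rcases h with rfl | h | h
      · exact subset_refl _
      · exact (ih1 h).trans ((Set.subset_union_left).trans (Set.subset_insert _ _))
      · exact (ih2 h).trans ((Set.subset_union_right).trans (Set.subset_insert _ _))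
  | untl ψ χ' ih1 ih2 =>
      simp only [sf, Set.mem_insert_iff, Set.mem_union] at h
      rcases h with rfl | h | h
      · exact subset_refl _
      · exact (ih1 h).trans ((Set.subset_union_left).trans (Set.subset_insert _ _))
      · exact (ih2 h).trans ((Set.subset_union_right).trans (Set.subset_insert _ _))
  | rels ψ χ' ih1 ih2 =>
      simp only [sf, Set.mem_insert_iff, Set.mem_union] at h
      rcases h with rfl | h | h
      · exact subset_refl _
      · exact (ih1 h).trans ((Set.subset_union_left).trans (Set.subset_insert _ _))
      · exact (ih2 h).trans ((Set.subset_union_right).trans (Set.subset_insert _ _))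

lemma sf_finite (φ : LTLf P) : (sf φ).Finite := by
  induction φ <;> simp only [sf] <;>
    first
      | exact Set.finite_singleton _
      | (apply Set.Finite.insert; assumption)
      | (apply Set.Finite.insert; exact Set.Finite.union (by assumption) (by assumption))

/-- Maximal atomic/temporal subformulas of `φ`. -/
def Lset (φ : LTLf P) : Set (LTLf P) := {χ | χ ∈ sf φ ∧ isAtomicOrTemporal χ}

lemma bc_of_sf {φ : LTLf P} : ∀ ψ : LTLf P, sf ψ ⊆ sf φ → BC (Lset φ) ψ := by
  intro ψ
  induction ψ with
  | tt => intro _; exact BC.tt'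
  | ff => intro _; exact BC.ff'
  | atom p => intro h; exact BC.base ⟨h (mem_sf_self _), trivial⟩
  | not ψ ih =>
      intro h
      exact BC.not' (ih (le_trans (Set.subset_insert _ _) h))
  | and ψ χ ih1 ih2 =>
      intro h
      exact BC.and'
        (ih1 (le_trans ((Set.subset_union_left).trans (Set.subset_insert _ _)) h))
        (ih2 (le_trans ((Set.subset_union_right).trans (Set.subset_insert _ _)) h))
  | or ψ χ ih1 ih2 =>
      intro h
      exact BC.or'
        (ih1 (le_trans ((Set.subset_union_left).trans (Set.subset_insert _ _)) h))
        (ih2 (le_trans ((Set.subset_union_right).trans (Set.subset_insert _ _)) h))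
  | next ψ _ => intro h; exact BC.base ⟨h (mem_sf_self _), trivial⟩
  | snext ψ _ => intro h; exact BC.base ⟨h (mem_sf_self _), trivial⟩
  | fin ψ _ => intro h; exact BC.base ⟨h (mem_sf_self _), trivial⟩
  | glob ψ _ => intro h; exact BC.base ⟨h (mem_sf_self _), trivial⟩
  | untl ψ χ _ _ => intro h; exact BC.base ⟨h (mem_sf_self _), trivial⟩
  | rels ψ χ _ _ => intro h; exact BC.base ⟨h (mem_sf_self _), trivial⟩

lemma bc_fp {φ : LTLf P} (w : P → Bool) :
    ∀ ψ : LTLf P, sf ψ ⊆ sf φ → BC (Lset φ) (fp w ψ).1 := by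
  intro ψ
  induction ψ with
  | tt => intro _; exact BC.tt'
  | ff => intro _; exact BC.ff'
  | atom p =>
      intro _
      by_cases h : w p = true <;> simp [fp, h] <;> first | exact BC.tt' | exact BC.ff'
  | not ψ ih =>
      intro h
      exact BC.not' (ih (le_trans (Set.subset_insert _ _) h))
  | and ψ χ ih1 ih2 =>
      intro h
      exact BC.and'
        (ih1 (le_trans ((Set.subset_union_left).trans (Set.subset_insert _ _)) h))
        (ih2 (le_trans ((Set.subset_union_right).trans (Set.subset_insert _ _)) h))
  | or ψ χ ih1 ih2 =>
      intro h
      exact BC.or'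
        (ih1 (le_trans ((Set.subset_union_left).trans (Set.subset_insert _ _)) h))
        (ih2 (le_trans ((Set.subset_union_right).trans (Set.subset_insert _ _)) h))
  | next ψ _ =>
      intro h
      exact bc_of_sf ψ (le_trans (Set.subset_insert _ _) h)
  | snext ψ _ =>
      intro h
      exact bc_of_sf ψ (le_trans (Set.subset_insert _ _) h)
  | fin ψ ih =>
      intro h
      exact BC.or' (ih (le_trans (Set.subset_insert _ _) h))
        (BC.base ⟨h (mem_sf_self _), trivial⟩)
  | glob ψ ih =>
      intro h
      exact BC.and' (ih (le_trans (Set.subset_insert _ _) h))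
        (BC.base ⟨h (mem_sf_self _), trivial⟩)
  | untl ψ χ ih1 ih2 =>
      intro h
      exact BC.or'
        (ih2 (le_trans ((Set.subset_union_right).trans (Set.subset_insert _ _)) h))
        (BC.and'
          (ih1 (le_trans ((Set.subset_union_left).trans (Set.subset_insert _ _)) h))
          (BC.base ⟨h (mem_sf_self _), trivial⟩))
  | rels ψ χ ih1 ih2 =>
      intro h
      exact BC.and'
        (ih2 (le_trans ((Set.subset_union_right).trans (Set.subset_insert _ _)) h))
        (BC.or'
          (ih1 (le_trans ((Set.subset_union_left).trans (Set.subset_insert _ _)) h))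
          (BC.base ⟨h (mem_sf_self _), trivial⟩))

lemma bc_fp_of_bc {φ ψ : LTLf P} (w : P → Bool) (h : BC (Lset φ) ψ) :
    BC (Lset φ) (fp w ψ).1 := by
  induction h with
  | base h => exact bc_fp w _ (sf_trans h.1)
  | tt' => exact BC.tt'
  | ff' => exact BC.ff'
  | not' _ ih => exact BC.not' ih
  | and' _ _ ih1 ih2 => exact BC.and' ih1 ih2
  | or' _ _ ih1 ih2 => exact BC.or' ih1 ih2

lemma bc_foldr_pand {X : Set (LTLf P)} :
    ∀ l : List (LTLf P × Bool), (∀ x ∈ l, BC X x.1) →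
      BC X (l.foldr pand (tt, true)).1 := by
  intro l
  induction l with
  | nil => intro _; exact BC.tt'
  | cons a l ih =>
      intro h
      exact BC.and' (h a List.mem_cons_self) (ih fun x hx => h x (List.mem_cons_of_mem _ hx))


lemma propEval_atomicOrTemporal {χ : LTLf P} (h : isAtomicOrTemporal χ)
    (v : LTLf P → Bool) : propEval v χ = v χ := by
  cases χ <;> first | rfl | exact absurd h (by simp [isAtomicOrTemporal])

lemma propEval_congr {X : Set (LTLf P)} (hX : ∀ χ ∈ X, isAtomicOrTemporal χ)
    {ψ : LTLf P} (h : BC X ψ) {v v' : LTLf P → Bool}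
    (hv : ∀ χ ∈ X, v χ = v' χ) : propEval v ψ = propEval v' ψ := by
  induction h with
  | base h => rw [propEval_atomicOrTemporal (hX _ h), propEval_atomicOrTemporal (hX _ h)]
              exact hv _ h
  | tt' => rfl
  | ff' => rfl
  | not' _ ih => simp only [propEval, ih]
  | and' _ _ ih1 ih2 => simp only [propEval, ih1, ih2]
  | or' _ _ ih1 ih2 => simp only [propEval, ih1, ih2]

lemma propEquiv_refl (φ : LTLf P) : propEquiv φ φ := fun _ => rfl

lemma pcls_eq_iff {φ ψ : LTLf P} : pcls φ = pcls ψ ↔ propEquiv φ ψ := by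
  constructor
  · intro h
    have : ψ ∈ pcls ψ := propEquiv_refl ψ
    rw [← h] at this
    exact this
  · intro h
    ext χ
    constructor <;> intro hχ <;> intro v
    · rw [← h v]; exact hχ v
    · rw [h v]; exact hχ v

end LTLf

open LTLf

section Main

variable {O U : Type} [Fintype U] [DecidableEq U]

lemma bc_fpObs {φ ψ : LTLf (O ⊕ U)} (h : BC (Lset φ) ψ) (wo : O → Bool) :
    BC (Lset φ) (fpObs ψ wo).1 := by
  apply bc_foldr_pand
  intro x hx
  simp only [List.mem_map] at hx
  obtain ⟨wu, _, rfl⟩ := hx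
  exact bc_fp_of_bc _ h

lemma bc_fpObsWord {φ : LTLf (O ⊕ U)} :
    ∀ (wos : List (O → Bool)) (ψ : LTLf (O ⊕ U)) (wo : O → Bool),
      BC (Lset φ) ψ → BC (Lset φ) (fpObsWord ψ wo wos).1 := by
  intro wos
  induction wos with
  | nil => intro ψ wo h; exact bc_fpObs h wo
  | cons w ws ih =>
      intro ψ wo h
      exact ih _ w (bc_fpObs h wo)

end Main
theorem beliefState_card_le {O U : Type} [Fintype O] [DecidableEq O]
    [Fintype U] [DecidableEq U] (φ : LTLf (O ⊕ U)) :
    Set.Finite {s : Set (LTLf (O ⊕ U)) | s = LTLf.pcls φ ∨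
        ∃ (wo : O → Bool) (wos : List (O → Bool)),
          s = LTLf.pcls (LTLf.fpObsWord φ wo wos).1} ∧
      Set.ncard {s : Set (LTLf (O ⊕ U)) | s = LTLf.pcls φ ∨
        ∃ (wo : O → Bool) (wos : List (O → Bool)),
          s = LTLf.pcls (LTLf.fpObsWord φ wo wos).1} ≤
        2 ^ 2 ^ (LTLf.sf φ).ncard := by
  classical
  set S := {s : Set (LTLf (O ⊕ U)) | s = LTLf.pcls φ ∨
      ∃ (wo : O → Bool) (wos : List (O → Bool)),
        s = LTLf.pcls (LTLf.fpObsWord φ wo wos).1} with hS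
  set L := Lset φ with hL
  have hLsub : L ⊆ sf φ := fun χ h => h.1
  have hLfin : L.Finite := (sf_finite φ).subset hLsub
  haveI : Finite ↥L := hLfin.to_subtype
  -- every member of S is the class of a formula in the Boolean closure of L
  have hmem : ∀ s ∈ S, ∃ ψ : LTLf (O ⊕ U), BC L ψ ∧ s = pcls ψ := by
    intro s hs
    rcases hs with rfl | ⟨wo, wos, rfl⟩
    · exact ⟨φ, bc_of_sf φ (subset_refl _), rfl⟩
    · exact ⟨_, bc_fpObsWord wos φ wo (bc_of_sf φ (subset_refl _)), rfl⟩
  -- the characteristic-function encoding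
  let ext : (↥L → Bool) → (LTLf (O ⊕ U) → Bool) := fun v χ =>
    if h : χ ∈ L then v ⟨χ, h⟩ else false
  let key : LTLf (O ⊕ U) → ((↥L → Bool) → Bool) := fun ψ v => propEval (ext v) ψ
  have hXat : ∀ χ ∈ L, isAtomicOrTemporal χ := fun χ h => h.2
  have keyinj : ∀ ψ ψ', BC L ψ → BC L ψ' → key ψ = key ψ' → pcls ψ = pcls ψ' := by
    intro ψ ψ' hψ hψ' hk
    rw [pcls_eq_iff]
    intro v
    have hvv : ∀ χ ∈ L, ext (fun a => v a.1) χ = v χ := by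
      intro χ h
      simp only [ext, dif_pos h]
    calc propEval v ψ = propEval (ext (fun a => v a.1)) ψ :=
          (propEval_congr hXat hψ hvv).symm
      _ = key ψ (fun a => v a.1) := rfl
      _ = key ψ' (fun a => v a.1) := by rw [hk]
      _ = propEval (ext (fun a => v a.1)) ψ' := rfl
      _ = propEval v ψ' := propEval_congr hXat hψ' hvv
  -- the decoding map
  let g : ((↥L → Bool) → Bool) → Set (LTLf (O ⊕ U)) := fun f =>
    if h : ∃ ψ, BC L ψ ∧ key ψ = f then pcls h.choose else ∅
  have hsub : S ⊆ Set.range g := by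
    intro s hs
    obtain ⟨ψ, hψ, rfl⟩ := hmem s hs
    refine ⟨key ψ, ?_⟩
    have hex : ∃ ψ', BC L ψ' ∧ key ψ' = key ψ := ⟨ψ, hψ, rfl⟩
    simp only [g, dif_pos hex]
    exact keyinj _ _ hex.choose_spec.1 hψ hex.choose_spec.2
  have hfin : S.Finite := (Set.finite_range g).subset hsub
  refine ⟨hfin, ?_⟩
  have h1 : S.ncard ≤ (Set.range g).ncard :=
    Set.ncard_le_ncard hsub (Set.finite_range g)
  have h2 : (Set.range g).ncard ≤ Nat.card ((↥L → Bool) → Bool) := by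
    rw [← Nat.card_coe_set_eq]
    exact Nat.card_le_card_of_surjective (Set.rangeFactorization g)
      Set.rangeFactorization_surjective
  have h3 : Nat.card ((↥L → Bool) → Bool) = 2 ^ 2 ^ L.ncard := by
    rw [Nat.card_fun, Nat.card_fun, Nat.card_eq_fintype_card (α := Bool)]
    simp [Nat.card_coe_set_eq]
  have h4 : L.ncard ≤ (sf φ).ncard := Set.ncard_le_ncard hLsub (sf_finite φ)
  calc S.ncard ≤ (Set.range g).ncard := h1
    _ ≤ Nat.card ((↥L → Bool) → Bool) := h2
    _ = 2 ^ 2 ^ L.ncard := h3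
    _ ≤ 2 ^ 2 ^ (sf φ).ncard := Nat.pow_le_pow_right (by norm_num)
          (Nat.pow_le_pow_right (by norm_num) h4)
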